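/- For x ≥ 1, ln(x) - ψ(x) > 1/(2x) + 1/(12x²) - 1/(120x⁴), where ψ is the digamma function. -/

import Mathlib

open Real Filter Topology Set

noncomputable def digamma (x : ℝ) : ℝ := deriv Real.Gamma x / Real.Gamma x

noncomputable def trigamma (x : ℝ) : ℝ := deriv digamma x

namespace DigammaLowerAux

noncomputable def gfun (y : ℝ) : ℝ := 1/(2*y) + 1/(12*y^2) - 1/(120*y^4)

lemma diffGamma {x : ℝ} (hx : 0 < x) : DifferentiableAt ℝ Real.Gamma x :=
  Real.differentiableAt_Gamma fun m => ((neg_nonpos.mpr m.cast_nonneg).trans_lt hx).ne'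

lemma digamma_add_one {x : ℝ} (hx : 0 < x) : digamma (x + 1) = digamma x + 1 / x := by
  have hG := diffGamma hx
  have hΓ := Real.Gamma_pos_of_pos hx
  have h1 : HasDerivAt (fun y : ℝ => Real.Gamma (y + 1)) (deriv Real.Gamma (x + 1)) x :=
    HasDerivAt.comp_add_const x 1 (diffGamma (by linarith)).hasDerivAt
  have h2 : HasDerivAt (fun y : ℝ => y * Real.Gamma y)
      (1 * Real.Gamma x + x * deriv Real.Gamma x) x :=
    (hasDerivAt_id x).mul hG.hasDerivAt
  have heq : (fun y : ℝ => Real.Gamma (y + 1)) =ᶠ[𝓝 x] fun y => y * Real.Gamma y := by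
    filter_upwards [eventually_gt_nhds hx] with y hy using Real.Gamma_add_one hy.ne'
  have h1' : HasDerivAt (fun y : ℝ => y * Real.Gamma y) (deriv Real.Gamma (x + 1)) x :=
    h1.congr_of_eventuallyEq heq.symm
  have hu : deriv Real.Gamma (x + 1) = 1 * Real.Gamma x + x * deriv Real.Gamma x :=
    h1'.unique h2
  have hΓ1 : Real.Gamma (x + 1) = x * Real.Gamma x := Real.Gamma_add_one hx.ne'
  rw [digamma, digamma, hu, hΓ1]
  field_simp
  ring

lemma digamma_le_log {y : ℝ} (hy : 0 < y) : digamma y ≤ Real.log y := by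
  have hc := Real.convexOn_log_Gamma
  have hΓ := Real.Gamma_pos_of_pos hy
  have hder : DifferentiableAt ℝ (Real.log ∘ Real.Gamma) y :=
    (diffGamma hy).log hΓ.ne'
  have h := hc.deriv_le_slope (mem_Ioi.mpr hy) (mem_Ioi.mpr (by linarith : (0:ℝ) < y + 1))
    (by linarith) hder
  have hd : deriv (Real.log ∘ Real.Gamma) y = digamma y := by
    rw [Function.comp_def, deriv.log (diffGamma hy) hΓ.ne']
    rfl
  have hs : slope (Real.log ∘ Real.Gamma) y (y + 1) = Real.log y := by
    rw [slope_def_field]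
    simp only [Function.comp_apply]
    rw [show y + 1 - y = (1:ℝ) by ring, div_one, Real.Gamma_add_one hy.ne',
      Real.log_mul hy.ne' hΓ.ne']
    ring
  rw [hd, hs] at h
  exact h

lemma telescope {x : ℝ} (hx : 0 < x) (n : ℕ) :
    Real.log x - digamma x =
      (∑ k ∈ Finset.range n, (1 / (x + k) - Real.log (x + k + 1) + Real.log (x + k)))
      + (Real.log (x + n) - digamma (x + n)) := by
  induction n with
  | zero => simp
  | succ n ih =>
    rw [Finset.sum_range_succ]
    have hxn : 0 < x + n := by positivity
    have hrec := digamma_add_one hxn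
    have : digamma (x + ((n : ℕ) + 1 : ℕ)) = digamma (x + n) + 1 / (x + n) := by
      push_cast
      rw [show x + ((n : ℝ) + 1) = (x + n) + 1 by ring, hrec]
    push_cast at this ⊢
    rw [ih]
    rw [show x + ((n : ℝ) + 1) = x + (n : ℝ) + 1 by ring] at this ⊢
    rw [this]
    ring

set_option maxHeartbeats 1600000 in
/-- Degree-12 rational upper bound for log(1+t). -/
lemma log_le_poly {t : ℝ} (ht : 0 ≤ t) :
    Real.log (1 + t) ≤ t - t^2/2 + t^3/3 - t^4/4 + t^5/5 - t^6/6 + t^7/7 - t^8/8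
      + t^9/9 - t^10/10 + t^11/11 - t^12/(12*(1+t)) := by
  have hderiv : ∀ s : ℝ, 0 ≤ s → HasDerivAt (fun s : ℝ => s - s^2/2 + s^3/3 - s^4/4 + s^5/5
      - s^6/6 + s^7/7 - s^8/8 + s^9/9 - s^10/10 + s^11/11 - s^12/(12*(1+s))
      - Real.log (1 + s)) (s^12/(12*(1+s)^2)) s := by
    intro s hs
    have h1 : (1:ℝ) + s ≠ 0 := by positivity
    have h12 : (12:ℝ) * (1 + s) ≠ 0 := by positivity
    have hden : HasDerivAt (fun u : ℝ => 12 * (1 + u)) (12 * 1) s :=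
      ((hasDerivAt_id s).const_add 1).const_mul 12
    have hq : HasDerivAt (fun u : ℝ => u^12 / (12*(1+u)))
        (((12:ℕ) * s^(12-1) * (12*(1+s)) - s^12 * (12*1)) / (12*(1+s))^2) s :=
      (hasDerivAt_pow 12 s).div hden h12
    have hlog : HasDerivAt (fun u : ℝ => Real.log (1 + u)) (1 / (1 + s)) s := by
      simpa using ((hasDerivAt_id s).const_add 1).log h1
    have H := ((((((((((((hasDerivAt_id s).sub
      ((hasDerivAt_pow 2 s).div_const 2)).add
      ((hasDerivAt_pow 3 s).div_const 3)).sub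
      ((hasDerivAt_pow 4 s).div_const 4)).add
      ((hasDerivAt_pow 5 s).div_const 5)).sub
      ((hasDerivAt_pow 6 s).div_const 6)).add
      ((hasDerivAt_pow 7 s).div_const 7)).sub
      ((hasDerivAt_pow 8 s).div_const 8)).add
      ((hasDerivAt_pow 9 s).div_const 9)).sub
      ((hasDerivAt_pow 10 s).div_const 10)).add
      ((hasDerivAt_pow 11 s).div_const 11)).sub hq).sub hlog
    convert H using 1
    · rfl
    · rfl
    · rfl
    have h2 : ((1:ℝ) + s)^2 ≠ 0 := pow_ne_zero 2 h1
    field_simp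
    ring
  have hmono : MonotoneOn (fun s : ℝ => s - s^2/2 + s^3/3 - s^4/4 + s^5/5
      - s^6/6 + s^7/7 - s^8/8 + s^9/9 - s^10/10 + s^11/11 - s^12/(12*(1+s))
      - Real.log (1 + s)) (Ici (0:ℝ)) := by
    apply monotoneOn_of_deriv_nonneg (convex_Ici 0)
    · exact fun s hs => ((hderiv s hs).continuousAt).continuousWithinAt
    · intro s hs
      rw [interior_Ici] at hs
      exact ((hderiv s (le_of_lt hs)).differentiableAt).differentiableWithinAt
    · intro s hs
      rw [interior_Ici] at hs
      rw [(hderiv s (le_of_lt hs)).deriv]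
      positivity
  have h := hmono (self_mem_Ici) (mem_Ici.mpr ht) ht
  norm_num at h
  linarith

set_option maxHeartbeats 1600000 in
/-- Key pointwise inequality with explicit margin. -/
lemma key_ineq {y : ℝ} (hy : 1 ≤ y) :
    gfun y - gfun (y+1) + 193/(27720 * y^11 * (y+1)^4)
      ≤ 1/y - Real.log (y + 1) + Real.log y := by
  obtain ⟨u, hu, rfl⟩ : ∃ u : ℝ, 0 ≤ u ∧ y = u + 1 := ⟨y - 1, by linarith, by ring⟩
  rw [show u + 1 + 1 = u + 2 from by ring]
  have hy0 : (0:ℝ) < u + 1 := by linarith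
  have hy1 : (0:ℝ) < u + 2 := by linarith
  set t : ℝ := 1 / (u + 1) with htdef
  have ht : 0 ≤ t := by positivity
  have hlog : Real.log (u + 2) - Real.log (u + 1) = Real.log (1 + t) := by
    have h1t : (1:ℝ) + t = (u + 2) / (u + 1) := by
      rw [htdef]
      field_simp
      ring
    rw [h1t, Real.log_div (by linarith) hy0.ne']
  have hA := log_le_poly ht
  have hrat : gfun (u+1) - gfun (u+2) + 193/(27720 * (u+1)^11 * (u+2)^4)
      ≤ 1/(u+1) - (t - t^2/2 + t^3/3 - t^4/4 + t^5/5 - t^6/6 + t^7/7 - t^8/8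
        + t^9/9 - t^10/10 + t^11/11 - t^12/(12*(1+t))) := by
    rw [← sub_nonneg]
    have hid : 1/(u+1) - (t - t^2/2 + t^3/3 - t^4/4 + t^5/5 - t^6/6 + t^7/7 - t^8/8
        + t^9/9 - t^10/10 + t^11/11 - t^12/(12*(1+t)))
        - (gfun (u+1) - gfun (u+2) + 193/(27720 * (u+1)^11 * (u+2)^4))
        = (6667*u + 24737*u^2 + 47809*u^3 + 57188*u^4 + 43648*u^5 + 20746*u^6
            + 5610*u^7 + 660*u^8) / (27720 * (u+1)^11 * (u+2)^4) := by
      rw [htdef]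
      have h1 : (1:ℝ) + 1/(u+1) = (u+2)/(u+1) := by
        field_simp
        ring
      rw [h1, gfun, gfun]
      field_simp
      ring
    rw [hid]
    apply div_nonneg
    · nlinarith [pow_nonneg hu 2, pow_nonneg hu 3, pow_nonneg hu 4, pow_nonneg hu 5,
        pow_nonneg hu 6, pow_nonneg hu 7, pow_nonneg hu 8]
    · positivity
  have hlog' : Real.log (u + 2) = Real.log (u+1) + Real.log (1 + t) := by
    linarith [hlog]
  rw [hlog']
  linarith [hA, hrat]

/-- gfun y ≤ 1/y for y ≥ 1. -/
lemma g_le {y : ℝ} (hy : 1 ≤ y) : gfun y ≤ 1/y := by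
  have hy0 : (0:ℝ) < y := by linarith
  rw [gfun]
  have h2 : 1/(12*y^2) ≤ 1/(12*y) := by
    apply one_div_le_one_div_of_le (by positivity)
    nlinarith
  have h4 : 0 < 1/(120*y^4) := by positivity
  have h5 : 1/(2*y) + 1/(12*y) ≤ 1/y := by
    rw [div_add_div _ _ (by positivity) (by positivity), div_le_div_iff₀ (by positivity) hy0]
    nlinarith
  linarith

end DigammaLowerAux

open DigammaLowerAux in
theorem log_sub_digamma_lower (x : ℝ) (hx : 1 ≤ x) :
    1 / (2 * x) + 1 / (12 * x ^ 2) - 1 / (120 * x ^ 4) < Real.log x - digamma x := by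
  have hx0 : 0 < x := by linarith
  obtain ⟨m, hmeq⟩ : ∃ m : ℝ, 193/(27720 * x^11 * (x+1)^4) = m := ⟨_, rfl⟩
  have hm0 : 0 < m := hmeq ▸ (by positivity)
  -- Sum inequality by induction
  have sumineq : ∀ n : ℕ, gfun x - gfun (x + ((n:ℝ)+1)) + m ≤
      ∑ k ∈ Finset.range (n+1), (1 / (x + k) - Real.log (x + k + 1) + Real.log (x + k)) := by
    intro n
    induction n with
    | zero =>
      simp only [Finset.sum_range_one, Nat.cast_zero, add_zero, zero_add]
      have hk := key_ineq hx
      rw [hmeq] at hk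
      linarith
    | succ n ih =>
      rw [Finset.sum_range_succ]
      have hxn : (1:ℝ) ≤ x + ((n:ℝ)+1) := by
        have h0 : (0:ℝ) ≤ (n:ℝ) + 1 := by positivity
        linarith
      have hk := key_ineq hxn
      have hmarg : 0 < 193/(27720 * (x+((n:ℝ)+1))^11 * ((x+((n:ℝ)+1))+1)^4) := by positivity
      have hterm : gfun (x + ((n:ℝ)+1)) - gfun (x + ((n:ℝ)+1) + 1)
          ≤ 1/(x + ((n:ℝ)+1)) - Real.log (x + ((n:ℝ)+1) + 1) + Real.log (x + ((n:ℝ)+1)) := by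
        linarith
      have hassoc : x + ((n:ℝ) + 1 + 1) = x + ((n:ℝ) + 1) + 1 := by ring
      push_cast
      rw [hassoc]
      push_cast at ih
      linarith
  -- choose n large
  obtain ⟨n, hn⟩ := exists_nat_gt (1/m)
  have hxn1 : (1:ℝ) ≤ x + ((n:ℝ)+1) := by
    have h0 : (0:ℝ) ≤ (n:ℝ) + 1 := by positivity
    linarith
  have hgsmall : gfun (x + ((n:ℝ)+1)) < m := by
    have h1 : gfun (x + ((n:ℝ)+1)) ≤ 1/(x + ((n:ℝ)+1)) := g_le hxn1
    have h2 : 1/m < x + ((n:ℝ)+1) := by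
      have hnlt : (n:ℝ) < x + ((n:ℝ)+1) := by linarith
      linarith
    have h3 : 1/(x + ((n:ℝ)+1)) < m := by
      rw [div_lt_iff₀ (by linarith : (0:ℝ) < x + ((n:ℝ)+1))]
      calc (1:ℝ) = m * (1/m) := by field_simp
      _ < m * (x + ((n:ℝ)+1)) := mul_lt_mul_of_pos_left h2 hm0
    linarith
  have htel := telescope hx0 (n+1)
  push_cast at htel
  have hrem : 0 ≤ Real.log (x + ((n:ℝ)+1)) - digamma (x + ((n:ℝ)+1)) := by
    have hp : (0:ℝ) < x + ((n:ℝ)+1) := by positivity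
    linarith [digamma_le_log hp]
  have hsum := sumineq n
  push_cast at hsum
  have hgoal : 1 / (2 * x) + 1 / (12 * x ^ 2) - 1 / (120 * x ^ 4) = gfun x := by
    rw [gfun]
  rw [hgoal, htel]
  linarith
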